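/- Let f : S² → ℝ² be continuous. Then the image under f of the coincidence set {x | f(x) = f(-x)} is a nonempty compact subset of ℝ². -/

import Mathlib

open Metric Complex Real Finset

section Aux

private lemma telescope_aux (F : ℕ → ℂ) (h0 : ∀ j, F j ≠ 0) (N : ℕ) :
    ∏ j ∈ range N, F (j+1) / F j = F N / F 0 := by
  induction N with
  | zero => simp [div_self (h0 0)]
  | succ n ih => rw [Finset.prod_range_succ, ih, div_mul_div_comm, mul_comm,
      mul_div_mul_right _ _ (h0 n)]

private lemma re_pos_of_close_aux (w : ℂ) (h : ‖w - 1‖ < 1) : 0 < w.re := by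
  have h2 : Complex.normSq (w - 1) < 1 := by
    have := Complex.sq_norm (w - 1); nlinarith [norm_nonneg (w-1)]
  rw [Complex.normSq_apply] at h2
  simp only [Complex.sub_re, Complex.sub_im, Complex.one_re, Complex.one_im] at h2
  nlinarith

private lemma exp_arg_mul_I_aux (z : ℂ) (hz : z ≠ 0) :
    Complex.exp (z.arg * I) = z / (‖z‖ : ℂ) := by
  rw [eq_div_iff (by simpa using norm_ne_zero_iff.mpr hz), mul_comm]
  exact_mod_cast Complex.norm_mul_exp_arg_mul_I z

private lemma exp_eq_one_real_aux (c : ℝ) (h : Complex.exp (c * I) = 1) :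
    ∃ k : ℤ, c = 2 * π * k := by
  rw [Complex.exp_eq_one_iff] at h
  obtain ⟨n, hn⟩ := h
  refine ⟨n, ?_⟩
  have h2 : (c : ℂ) * I = ((n * (2 * π) : ℝ) : ℂ) * I := by rw [hn]; push_cast; ring
  have h3 : (c : ℂ) = ((n * (2 * π) : ℝ) : ℂ) := mul_right_cancel₀ Complex.I_ne_zero h2
  have := Complex.ofReal_injective h3
  linarith

/-- Continuous choice of argument on the closed unit disk, for a nonvanishing map. -/
private lemma exists_cont_arg_aux (H : ℂ → ℂ) (hc : Continuous H) (h0 : ∀ p, H p ≠ 0) :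
    ∃ θ : ℂ → ℝ, ContinuousOn θ (closedBall 0 1) ∧
      ∀ p ∈ closedBall (0:ℂ) 1,
        H p = (‖H p‖ : ℂ) * Complex.exp (θ p * I) := by
  obtain ⟨z, hz, hmin⟩ := (isCompact_closedBall (0:ℂ) 1).exists_isMinOn ⟨0, by simp⟩
    (hc.norm.continuousOn)
  set m : ℝ := ‖H z‖ with hm
  have hm0 : 0 < m := norm_pos_iff.mpr (h0 z)
  obtain ⟨δ, hδ0, hδ⟩ : ∃ δ > 0, ∀ x ∈ closedBall (0:ℂ) 1, ∀ y ∈ closedBall (0:ℂ) 1,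
      dist x y < δ → dist (H x) (H y) < m := by
    have := (isCompact_closedBall (0:ℂ) 1).uniformContinuousOn_of_continuous hc.continuousOn
    rw [Metric.uniformContinuousOn_iff] at this
    exact this m hm0
  obtain ⟨N, hN⟩ : ∃ N : ℕ, (1:ℝ)/(N+1) < δ := exists_nat_one_div_lt hδ0
  set c : ℕ → ℂ → ℂ := fun j x => ((j:ℝ)/(N+1) : ℝ) • x with hcdef
  have hcK : ∀ x ∈ closedBall (0:ℂ) 1, ∀ j : ℕ, j ≤ N+1 → c j x ∈ closedBall (0:ℂ) 1 := by
    intro x hx j hj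
    rw [mem_closedBall_zero_iff] at hx ⊢
    rw [hcdef]; simp only [norm_smul, Real.norm_eq_abs]
    have hj' : (j:ℝ)/(N+1) ≤ 1 := by
      rw [div_le_one (by positivity)]; exact_mod_cast hj
    have : |(j:ℝ)/(N+1)| = (j:ℝ)/(N+1) := abs_of_nonneg (by positivity)
    rw [this]
    calc (j:ℝ)/(N+1) * ‖x‖ ≤ 1 * 1 := by
          apply mul_le_mul hj' hx (norm_nonneg x) zero_le_one
      _ = 1 := one_mul 1
  have hclose : ∀ x ∈ closedBall (0:ℂ) 1, ∀ j : ℕ,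
      dist (c (j+1) x) (c j x) < δ := by
    intro x hx j
    rw [mem_closedBall_zero_iff] at hx
    rw [hcdef]; simp only [dist_eq_norm, ← sub_smul, norm_smul, Real.norm_eq_abs]
    have h1 : ((j:ℝ)+1)/(N+1) - (j:ℝ)/(N+1) = 1/(N+1) := by field_simp; ring
    push_cast
    rw [h1, _root_.abs_of_nonneg (by positivity : (0:ℝ) ≤ 1/(N+1))]
    calc 1/((N:ℝ)+1) * ‖x‖ ≤ 1/((N:ℝ)+1) * 1 := by
          apply mul_le_mul_of_nonneg_left hx (by positivity)
      _ = 1/((N:ℝ)+1) := mul_one _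
      _ < δ := hN
  set q : ℕ → ℂ → ℂ := fun j x => H (c (j+1) x) / H (c j x) with hq
  have hqre : ∀ x ∈ closedBall (0:ℂ) 1, ∀ j : ℕ, j + 1 ≤ N + 1 → 0 < (q j x).re := by
    intro x hx j hj
    apply re_pos_of_close_aux
    have hb : H (c j x) ≠ 0 := h0 _
    have hdist : ‖H (c (j+1) x) - H (c j x)‖ < m := by
      have := hδ _ (hcK x hx (j+1) hj) _ (hcK x hx j (by omega)) (hclose x hx j)
      rwa [dist_eq_norm] at this
    have hmb : m ≤ ‖H (c j x)‖ := hmin (hcK x hx j (by omega))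
    rw [hq]
    have : H (c (j+1) x) / H (c j x) - 1 = (H (c (j+1) x) - H (c j x)) / H (c j x) := by
      field_simp
    have hpos : 0 < ‖H (c j x)‖ := lt_of_lt_of_le hm0 (by simpa using hmb)
    rw [this, norm_div, div_lt_one hpos]
    exact lt_of_lt_of_le hdist (by simpa using hmb)
  refine ⟨fun x => (H 0).arg + ∑ j ∈ range (N+1), (q j x).arg, ?_, ?_⟩
  · apply ContinuousOn.add continuousOn_const
    apply continuousOn_finset_sum
    intro j hj
    intro x hx
    apply ContinuousAt.continuousWithinAt
    have hqc : ContinuousAt (q j) x := by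
      apply ContinuousAt.div
      · exact (hc.comp (by fun_prop)).continuousAt
      · exact (hc.comp (by fun_prop)).continuousAt
      · exact h0 _
    exact (Complex.continuousAt_arg (Or.inl (hqre x hx j (by
      have := Finset.mem_range.mp hj; omega)))).comp hqc
  · intro x hx
    have hqne : ∀ j, q j x ≠ 0 := fun j => div_ne_zero (h0 _) (h0 _)
    have key : Complex.exp ((((H 0).arg + ∑ j ∈ range (N+1), (q j x).arg : ℝ)) * I)
        = (H 0 / (‖H 0‖ : ℂ)) * ∏ j ∈ range (N+1), (q j x / (‖q j x‖ : ℂ)) := by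
      push_cast
      rw [add_mul, Complex.exp_add, exp_arg_mul_I_aux _ (h0 0)]
      congr 1
      rw [Finset.sum_mul, Complex.exp_sum]
      exact Finset.prod_congr rfl fun j _ => exp_arg_mul_I_aux _ (hqne j)
    rw [key]
    have htel : ∏ j ∈ range (N+1), q j x = H x / H 0 := by
      have := telescope_aux (fun j => H (c j x)) (fun j => h0 _) (N+1)
      have he1 : c (N+1) x = x := by
        rw [hcdef]; push_cast
        rw [div_self (by positivity : ((N:ℝ)+1) ≠ 0), one_smul]
      have he0 : c 0 x = 0 := by rw [hcdef]; push_cast; simp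
      rw [hq]
      rw [this, he1, he0]
    have habs : ∏ j ∈ range (N+1), ((‖q j x‖ : ℂ)) =
        ((‖H x / H 0‖ : ℂ)) := by
      rw [← Complex.ofReal_prod, ← norm_prod, htel]
    rw [Finset.prod_div_distrib, htel, habs]
    have h0x : H x ≠ 0 := h0 x
    have h00 : H 0 ≠ 0 := h0 0
    have ha0 : (‖H 0‖ : ℂ) ≠ 0 := by simpa using norm_ne_zero_iff.mpr h00
    have hax : (‖H x‖ : ℂ) ≠ 0 := by simpa using norm_ne_zero_iff.mpr h0x
    rw [norm_div]
    push_cast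
    field_simp

/-- Embedding of the unit disk into the upper hemisphere. -/
private noncomputable def s3aux (p : ℂ) : EuclideanSpace ℝ (Fin 3) :=
  (WithLp.equiv 2 (Fin 3 → ℝ)).symm ![p.re, p.im, Real.sqrt (1 - p.re^2 - p.im^2)]

private lemma s3aux_cont : Continuous s3aux := by
  apply (PiLp.continuous_toLp 2 (fun _ : Fin 3 => ℝ)).comp
  apply continuous_pi
  intro i
  fin_cases i <;> simp <;> fun_prop

private lemma sq_add_sq_le_aux (p : ℂ) (hp : ‖p‖ ≤ 1) : p.re^2 + p.im^2 ≤ 1 := by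
  have h := Complex.sq_norm p
  rw [Complex.normSq_apply] at h
  nlinarith [norm_nonneg p]

private lemma s3aux_mem (p : ℂ) (hp : ‖p‖ ≤ 1) :
    s3aux p ∈ sphere (0 : EuclideanSpace ℝ (Fin 3)) 1 := by
  have h1 := sq_add_sq_le_aux p hp
  rw [mem_sphere_zero_iff_norm, EuclideanSpace.norm_eq]
  have hsq : Real.sqrt (1 - p.re^2 - p.im^2) ^ 2 = 1 - p.re^2 - p.im^2 :=
    Real.sq_sqrt (by linarith)
  rw [Fin.sum_univ_three]
  simp only [s3aux, WithLp.equiv_symm_apply, PiLp.toLp_apply, Matrix.cons_val_zero, Matrix.cons_val_one,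
    Matrix.head_cons, Matrix.cons_val_two, Matrix.tail_cons, Real.norm_eq_abs, _root_.sq_abs]
  rw [hsq]
  rw [show p.re^2 + p.im^2 + (1 - p.re^2 - p.im^2) = 1 by ring, Real.sqrt_one]

private lemma s3aux_odd (p : ℂ) (hp : ‖p‖ = 1) : s3aux (-p) = - s3aux p := by
  have h1 : p.re^2 + p.im^2 = 1 := by
    have h := Complex.sq_norm p
    rw [Complex.normSq_apply, hp] at h
    nlinarith
  ext i
  fin_cases i <;> simp [s3aux] <;>
    (rw [show (1 : ℝ) - p.re^2 - p.im^2 = 0 by nlinarith]; simp)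

/-- Radial retraction onto the closed unit disk. -/
private noncomputable def rCaux (p : ℂ) : ℂ := (max 1 ‖p‖)⁻¹ • p

private lemma rCaux_cont : Continuous rCaux := by
  unfold rCaux
  apply Continuous.fun_smul _ continuous_id
  exact ((continuous_const.max continuous_norm).inv₀ (fun x => by positivity))

private lemma rCaux_norm_le (p : ℂ) : ‖rCaux p‖ ≤ 1 := by
  rw [rCaux, norm_smul, norm_inv, Real.norm_eq_abs,
    _root_.abs_of_pos (lt_of_lt_of_le zero_lt_one (le_max_left _ _))]
  rw [inv_mul_le_iff₀ (lt_of_lt_of_le zero_lt_one (le_max_left _ _)), mul_one]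
  exact le_max_right _ _

private lemma rCaux_eq (p : ℂ) (h : ‖p‖ ≤ 1) : rCaux p = p := by
  rw [rCaux, max_eq_left h, inv_one, one_smul]

/-- Identification of `EuclideanSpace ℝ (Fin 2)` with `ℂ`. -/
private noncomputable def iotaAux (v : EuclideanSpace ℝ (Fin 2)) : ℂ := ⟨v 0, v 1⟩

private lemma iotaAux_cont : Continuous iotaAux := by
  have h0 : Continuous fun v : EuclideanSpace ℝ (Fin 2) => v 0 :=
    (EuclideanSpace.proj (0 : Fin 2) : EuclideanSpace ℝ (Fin 2) →L[ℝ] ℝ).continuous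
  have h1 : Continuous fun v : EuclideanSpace ℝ (Fin 2) => v 1 :=
    (EuclideanSpace.proj (1 : Fin 2) : EuclideanSpace ℝ (Fin 2) →L[ℝ] ℝ).continuous
  have : Continuous fun v : EuclideanSpace ℝ (Fin 2) =>
      ((v 0 : ℂ) + (v 1 : ℂ) * Complex.I) :=
    (Complex.continuous_ofReal.comp h0).add
      ((Complex.continuous_ofReal.comp h1).mul continuous_const)
  apply this.congr
  intro v
  simp [iotaAux, Complex.ext_iff]

private lemma iotaAux_inj (a b : EuclideanSpace ℝ (Fin 2)) (h : iotaAux a = iotaAux b) :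
    a = b := by
  have h0 : a 0 = b 0 := congrArg Complex.re h
  have h1 : a 1 = b 1 := congrArg Complex.im h
  ext i
  fin_cases i <;> assumption

end Aux

noncomputable abbrev S2 := Metric.sphere (0 : EuclideanSpace ℝ (Fin 3)) 1

/-- Borsuk–Ulam for maps `S² → ℝ²`. -/
private theorem borsuk_ulam_aux (f : S2 → EuclideanSpace ℝ (Fin 2)) (hf : Continuous f) :
    ∃ x : S2, f x = f (-x) := by
  by_contra hcon
  push_neg at hcon
  have hnegc : Continuous (fun x : S2 => -x) := by continuity
  -- the odd difference map
  set g : S2 → ℂ := fun x => iotaAux (f x) - iotaAux (f (-x)) with hgdef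
  have hgc : Continuous g := (iotaAux_cont.comp hf).sub (iotaAux_cont.comp (hf.comp hnegc))
  have hg0 : ∀ x, g x ≠ 0 := fun x => sub_ne_zero.mpr (fun he => hcon x (iotaAux_inj _ _ he))
  have hgodd : ∀ x, g (-x) = - g x := by
    intro x
    rw [hgdef]
    simp only [neg_neg]
    ring
  -- the disk map
  have hsph : ∀ p : ℂ, s3aux (rCaux p) ∈ sphere (0 : EuclideanSpace ℝ (Fin 3)) 1 :=
    fun p => s3aux_mem _ (rCaux_norm_le p)
  set G : ℂ → ℂ := fun p => g ⟨s3aux (rCaux p), hsph p⟩ with hGdef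
  have hGc : Continuous G :=
    hgc.comp (Continuous.subtype_mk (s3aux_cont.comp rCaux_cont) _)
  have hG0 : ∀ p, G p ≠ 0 := fun p => hg0 _
  have hGodd : ∀ p : ℂ, ‖p‖ = 1 → G (-p) = - G p := by
    intro p hp
    have hr : rCaux p = p := rCaux_eq p hp.le
    have hrn : rCaux (-p) = -p := rCaux_eq (-p) (by rw [norm_neg, hp])
    have hsub : (⟨s3aux (rCaux (-p)), hsph (-p)⟩ : S2) = -⟨s3aux (rCaux p), hsph p⟩ := by
      apply Subtype.ext
      simp only [hr, hrn]
      rw [s3aux_odd p hp]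
      simp
    rw [hGdef]
    simp only [hsub]
    exact hgodd _
  -- continuous argument on the disk
  obtain ⟨θ, hθc, hθeq⟩ := exists_cont_arg_aux G hGc hG0
  set e : ℝ → ℂ := fun t => Complex.exp (t * I) with hedef
  have he1 : ∀ t, ‖e t‖ = 1 := fun t => by
    rw [hedef]; exact Complex.norm_exp_ofReal_mul_I t
  have heK : ∀ t, e t ∈ closedBall (0:ℂ) 1 := fun t => by
    rw [mem_closedBall_zero_iff, he1]
  have hec : Continuous e := by
    rw [hedef]; exact Complex.continuous_exp.comp (Complex.continuous_ofReal.mul continuous_const)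
  have heneg : ∀ t, e (t + π) = - e t := by
    intro t
    rw [hedef]
    push_cast
    rw [add_mul, Complex.exp_add, Complex.exp_pi_mul_I]
    ring
  -- the half-turn defect
  set φ : ℝ → ℝ := fun t => θ (e (t + π)) - θ (e t) - π with hφdef
  have hφc : Continuous φ := by
    apply Continuous.sub _ continuous_const
    apply Continuous.sub
    · exact hθc.comp_continuous (hec.comp (continuous_id.add continuous_const)) (fun t => heK _)
    · exact hθc.comp_continuous hec (fun t => heK _)
  have hφint : ∀ t, ∃ k : ℤ, φ t = 2 * π * k := by
    intro t
    apply exp_eq_one_real_aux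
    have h2 := hθeq (e t) (heK t)
    have h1 := hθeq (e (t + π)) (heK (t + π))
    have hGe : G (e (t + π)) = - G (e t) := by rw [heneg t]; exact hGodd _ (he1 t)
    rw [hGe, norm_neg] at h1
    have hane : (‖G (e t)‖ : ℂ) ≠ 0 := by
      simpa using norm_ne_zero_iff.mpr (hG0 (e t))
    have hexp : Complex.exp ((θ (e (t+π)) : ℂ) * I) = - Complex.exp ((θ (e t) : ℂ) * I) := by
      apply mul_left_cancel₀ hane
      linear_combination -h1 - h2
    show Complex.exp (((θ (e (t + π)) - θ (e t) - π : ℝ) : ℂ) * I) = 1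
    push_cast
    rw [sub_mul, sub_mul, Complex.exp_sub, Complex.exp_sub, hexp, Complex.exp_pi_mul_I]
    rw [neg_div, div_self (Complex.exp_ne_zero _)]
    norm_num
  -- φ is constant
  have hφconst : ∀ t, φ t = φ 0 := by
    intro t
    by_contra hne
    obtain ⟨k0, hk0⟩ := hφint 0
    obtain ⟨kt, hkt⟩ := hφint t
    have hparity : ∀ y ∈ Set.range φ, ¬ ∃ k : ℤ, y = 2 * π * k + π := by
      rintro y ⟨s, rfl⟩ ⟨k, hk⟩
      obtain ⟨ks, hks⟩ := hφint s
      rw [hks] at hk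
      have h2 : π * (2 * (ks : ℝ)) = π * (2 * (k : ℝ) + 1) := by linarith
      have h3 := mul_left_cancel₀ Real.pi_ne_zero h2
      have : (2 * ks : ℤ) = 2 * k + 1 := by exact_mod_cast h3
      omega
    rcases lt_trichotomy (φ 0) (φ t) with hlt | heq | hgt
    · have hkk : k0 < kt := by
        by_contra hkk
        push_neg at hkk
        rw [hk0, hkt] at hlt
        have : (kt : ℝ) ≤ k0 := by exact_mod_cast hkk
        nlinarith [Real.pi_pos]
      have hmem : 2 * π * k0 + π ∈ Set.Icc (φ 0) (φ t) := by
        constructor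
        · rw [hk0]; nlinarith [Real.pi_pos]
        · rw [hkt]
          have : (k0 : ℝ) + 1 ≤ kt := by exact_mod_cast hkk
          nlinarith [Real.pi_pos]
      obtain ⟨s, hs⟩ := intermediate_value_univ 0 t hφc hmem
      exact hparity _ ⟨s, hs⟩ ⟨k0, rfl⟩
    · exact hne heq.symm
    · have hkk : kt < k0 := by
        by_contra hkk
        push_neg at hkk
        rw [hk0, hkt] at hgt
        have : (k0 : ℝ) ≤ kt := by exact_mod_cast hkk
        nlinarith [Real.pi_pos]
      have hmem : 2 * π * kt + π ∈ Set.Icc (φ t) (φ 0) := by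
        constructor
        · rw [hkt]; nlinarith [Real.pi_pos]
        · rw [hk0]
          have : (kt : ℝ) + 1 ≤ k0 := by exact_mod_cast hkk
          nlinarith [Real.pi_pos]
      obtain ⟨s, hs⟩ := intermediate_value_univ t 0 hφc hmem
      exact hparity _ ⟨s, hs⟩ ⟨kt, rfl⟩
  -- derive the contradiction
  obtain ⟨k0, hk0⟩ := hφint 0
  have hA : θ (e (0 + π)) - θ (e 0) - π = 2 * π * k0 := hk0
  have hB : θ (e (π + π)) - θ (e π) - π = 2 * π * k0 := (hφconst π).trans hk0
  have he2π : e (π + π) = e 0 := by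
    rw [hedef]
    push_cast
    rw [show ((π : ℂ) + π) * I = 2 * π * I by ring, Complex.exp_two_pi_mul_I]
    simp
  rw [zero_add] at hA
  rw [he2π] at hB
  have h4 : π * (4 * (k0 : ℝ) + 2) = π * 0 := by linarith
  have h5 := mul_left_cancel₀ Real.pi_ne_zero h4
  have : (4 * k0 + 2 : ℤ) = 0 := by exact_mod_cast h5
  omega

theorem image_of_coincidence_set (f : S2 → EuclideanSpace ℝ (Fin 2)) (hf : Continuous f) :
    (f '' {x : S2 | f x = f (-x)}).Nonempty ∧ IsCompact (f '' {x : S2 | f x = f (-x)}) := by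
  constructor
  · obtain ⟨x, hx⟩ := borsuk_ulam_aux f hf
    exact ⟨f x, x, hx, rfl⟩
  · have hnegc : Continuous (fun x : S2 => -x) := by continuity
    have hclosed : IsClosed {x : S2 | f x = f (-x)} :=
      isClosed_eq hf (hf.comp hnegc)
    exact (hclosed.isCompact).image hf
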